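/- arXiv:1703.08058 — 3 statements merged into one kernel-verified Lean document; each statement's English description precedes it below -/
import Mathlib

section
/- Let n ≥ 3, let 𝒢_n be the set of simple graphs on {1,…,n}, and for G ∈ 𝒢_n let T₂(G) = Δ(G)/binom(n,3) be its triangle density. For θ ∈ ℝ define the canonical ensemble P_θ(G) = exp(θ T₂(G))/Z(θ) with Z(θ) = Σ_{G∈𝒢_n} exp(θ T₂(G)), and suppose the parameter θ* ∈ ℝ satisfies the soft constraint Σ_{G∈𝒢_n} T₂(G) P_{θ*}(G) = T₂*. Then θ* ≥ 0 if and only if T₂* ≥ 1/8. -/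
open Finset

/-- The number of triangles (3-cliques) of a simple graph. -/
noncomputable def numTriangles {n : ℕ} (G : SimpleGraph (Fin n)) : ℕ :=
  {t : Finset (Fin n) | G.IsNClique 3 t}.ncard

/-- The triangle density of a simple graph on `n` vertices. -/
noncomputable def triangleDensity {n : ℕ} (G : SimpleGraph (Fin n)) : ℝ :=
  (numTriangles G : ℝ) / (n.choose 3 : ℝ)

open scoped Classical symmDiff

namespace TriangleAux

variable {n : ℕ}

/-- The graph with a single edge `u v`. -/
noncomputable def E (u v : Fin n) : SimpleGraph (Fin n) :=
  SimpleGraph.fromEdgeSet {s(u, v)}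

lemma E_adj (u v x y : Fin n) :
    (E u v).Adj x y ↔ ((x = u ∧ y = v) ∨ (x = v ∧ y = u)) ∧ x ≠ y := by
  simp [E, SimpleGraph.fromEdgeSet_adj, Sym2.eq_iff]

lemma symmDiff_adj (G H : SimpleGraph (Fin n)) (x y : Fin n) :
    (G ∆ H).Adj x y ↔ (G.Adj x y ∧ ¬H.Adj x y) ∨ (H.Adj x y ∧ ¬G.Adj x y) := by
  rw [symmDiff_def]
  simp [SimpleGraph.sup_adj, SimpleGraph.sdiff_adj]

lemma half (Q : SimpleGraph (Fin n) → Prop) (u v : Fin n) (huv : u ≠ v)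
    (hQ : ∀ G, Q (G ∆ E u v) ↔ Q G) :
    (univ.filter Q).card = 2 * (univ.filter (fun G => Q G ∧ G.Adj u v)).card := by
  have hEuv : (E u v).Adj u v := by
    rw [E_adj]; exact ⟨Or.inl ⟨rfl, rfl⟩, huv⟩
  have key : (univ.filter (fun G => Q G ∧ ¬G.Adj u v)).card
      = (univ.filter (fun G => Q G ∧ G.Adj u v)).card := by
    apply Finset.card_bij (fun G _ => G ∆ E u v)
    · intro G hG
      simp only [Finset.mem_filter, Finset.mem_univ, true_and] at hG ⊢
      refine ⟨(hQ G).2 hG.1, ?_⟩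
      rw [symmDiff_adj]
      exact Or.inr ⟨hEuv, hG.2⟩
    · intro G hG G' hG' h
      have := congrArg (· ∆ E u v) h
      simpa [symmDiff_symmDiff_cancel_right] using this
    · intro H hH
      simp only [Finset.mem_filter, Finset.mem_univ, true_and] at hH
      refine ⟨H ∆ E u v, ?_, ?_⟩
      · simp only [Finset.mem_filter, Finset.mem_univ, true_and]
        constructor
        · rw [hQ]; exact hH.1
        · rw [symmDiff_adj]
          rintro (⟨_, hE⟩ | ⟨_, hHn⟩)
          · exact hE hEuv
          · exact hHn hH.2
      · rw [symmDiff_symmDiff_cancel_right]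
  have split : (univ.filter (fun G => Q G ∧ G.Adj u v)).card
      + (univ.filter (fun G => Q G ∧ ¬G.Adj u v)).card = (univ.filter Q).card := by
    rw [← Finset.filter_filter, ← Finset.filter_filter]
    exact Finset.card_filter_add_card_filter_not _
  omega

lemma count_triple (a b c : Fin n) (hab : a ≠ b) (hac : a ≠ c) (hbc : b ≠ c) :
    Fintype.card (SimpleGraph (Fin n))
      = 8 * (univ.filter (fun G : SimpleGraph (Fin n) =>
          G.Adj a b ∧ G.Adj a c ∧ G.Adj b c)).card := by
  have hne1 : ¬ (E a c).Adj a b := by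
    rw [E_adj]
    rintro ⟨h1 | h1, _⟩
    · exact hbc h1.2
    · exact hac h1.1
  have hne2 : ¬ (E b c).Adj a b := by
    rw [E_adj]
    rintro ⟨h1 | h1, _⟩
    · exact hab h1.1
    · exact hac h1.1
  have hne3 : ¬ (E b c).Adj a c := by
    rw [E_adj]
    rintro ⟨h1 | h1, _⟩
    · exact hab h1.1
    · exact hac h1.1
  have hEab_ac : ∀ G : SimpleGraph (Fin n), (G ∆ E a c).Adj a b ↔ G.Adj a b := by
    intro G; rw [symmDiff_adj]; tauto
  have hEab_bc : ∀ G : SimpleGraph (Fin n), (G ∆ E b c).Adj a b ↔ G.Adj a b := by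
    intro G; rw [symmDiff_adj]; tauto
  have hEac_bc : ∀ G : SimpleGraph (Fin n), (G ∆ E b c).Adj a c ↔ G.Adj a c := by
    intro G; rw [symmDiff_adj]; tauto
  have h1 := half (fun _ : SimpleGraph (Fin n) => True) a b hab (fun _ => Iff.rfl)
  have h2 := half (fun G : SimpleGraph (Fin n) => True ∧ G.Adj a b) a c hac
    (fun G => by have := hEab_ac G; tauto)
  have h3 := half (fun G : SimpleGraph (Fin n) => (True ∧ G.Adj a b) ∧ G.Adj a c) b c hbc
    (fun G => by have e1 := hEab_bc G; have e2 := hEac_bc G; tauto)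
  simp only [true_and, and_assoc, Finset.filter_true] at h1 h2 h3
  rw [h2, h3, Finset.card_univ] at h1
  omega

lemma numTriangles_eq_filter (G : SimpleGraph (Fin n)) :
    numTriangles G = (univ.filter (fun t : Finset (Fin n) => G.IsNClique 3 t)).card := by
  rw [numTriangles, Set.ncard_eq_toFinset_card', Set.toFinset_setOf]

lemma sum_numTriangles :
    8 * ∑ G : SimpleGraph (Fin n), numTriangles G
      = Fintype.card (SimpleGraph (Fin n)) * n.choose 3 := by
  have swap : ∑ G : SimpleGraph (Fin n), numTriangles G
      = ∑ t : Finset (Fin n),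
          (univ.filter (fun G : SimpleGraph (Fin n) => G.IsNClique 3 t)).card := by
    simp only [numTriangles_eq_filter, Finset.card_filter]
    rw [Finset.sum_comm]
  rw [swap]
  have hzero : ∀ t : Finset (Fin n), t.card ≠ 3 →
      (univ.filter (fun G : SimpleGraph (Fin n) => G.IsNClique 3 t)).card = 0 := by
    intro t ht
    rw [Finset.card_eq_zero, Finset.filter_eq_empty_iff]
    intro G _
    exact fun h => ht h.card_eq
  have hrestrict : ∑ t : Finset (Fin n),
        (univ.filter (fun G : SimpleGraph (Fin n) => G.IsNClique 3 t)).card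
      = ∑ t ∈ univ.filter (fun t : Finset (Fin n) => t.card = 3),
        (univ.filter (fun G : SimpleGraph (Fin n) => G.IsNClique 3 t)).card := by
    rw [Finset.sum_filter_of_ne]
    intro t _ h
    by_contra hc
    exact h (hzero t hc)
  rw [hrestrict, Finset.mul_sum]
  have hterm : ∀ t ∈ univ.filter (fun t : Finset (Fin n) => t.card = 3),
      8 * (univ.filter (fun G : SimpleGraph (Fin n) => G.IsNClique 3 t)).card
        = Fintype.card (SimpleGraph (Fin n)) := by
    intro t ht
    rw [Finset.mem_filter] at ht
    obtain ⟨a, b, c, hab, hac, hbc, rfl⟩ := Finset.card_eq_three.1 ht.2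
    have : (univ.filter (fun G : SimpleGraph (Fin n) => G.IsNClique 3 ({a, b, c} : Finset (Fin n))))
        = (univ.filter (fun G : SimpleGraph (Fin n) => G.Adj a b ∧ G.Adj a c ∧ G.Adj b c)) := by
      apply Finset.filter_congr
      intro G _
      exact SimpleGraph.is3Clique_triple_iff
    rw [this, ← count_triple a b c hab hac hbc]
  rw [Finset.sum_congr rfl hterm, Finset.sum_const, smul_eq_mul, mul_comm]
  congr 1
  have : (univ.filter (fun t : Finset (Fin n) => t.card = 3))
      = Finset.powersetCard 3 (univ : Finset (Fin n)) := by
    rw [Finset.powersetCard_eq_filter, Finset.powerset_univ]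
  rw [this, Finset.card_powersetCard, Finset.card_univ, Fintype.card_fin]

lemma sum_density (hn : 3 ≤ n) :
    ∑ G : SimpleGraph (Fin n), triangleDensity G
      = (Fintype.card (SimpleGraph (Fin n)) : ℝ) / 8 := by
  have hch : (0 : ℝ) < (n.choose 3 : ℝ) := by
    exact_mod_cast Nat.choose_pos hn
  have key : (8 : ℝ) * ∑ G : SimpleGraph (Fin n), (numTriangles G : ℝ)
      = (Fintype.card (SimpleGraph (Fin n)) : ℝ) * (n.choose 3 : ℝ) := by
    exact_mod_cast congrArg (Nat.cast : ℕ → ℝ) (sum_numTriangles (n := n))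
  simp only [triangleDensity]
  rw [← Finset.sum_div]
  rw [div_eq_div_iff hch.ne' (by norm_num : (8:ℝ) ≠ 0)]
  linarith [key]

lemma density_top (hn : 3 ≤ n) : triangleDensity (⊤ : SimpleGraph (Fin n)) = 1 := by
  have hch : (0 : ℝ) < (n.choose 3 : ℝ) := by
    exact_mod_cast Nat.choose_pos hn
  have hset : {t : Finset (Fin n) | (⊤ : SimpleGraph (Fin n)).IsNClique 3 t}
      = {t : Finset (Fin n) | t.card = 3} := by
    ext t
    simp only [Set.mem_setOf_eq]
    constructor
    · exact fun h => h.card_eq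
    · intro h
      refine ⟨?_, h⟩
      intro x _ y _ hxy
      exact hxy
  have hnum : numTriangles (⊤ : SimpleGraph (Fin n)) = n.choose 3 := by
    rw [numTriangles, hset, Set.ncard_eq_toFinset_card', Set.toFinset_setOf]
    have h2 : (univ.filter (fun t : Finset (Fin n) => t.card = 3))
        = Finset.powersetCard 3 (univ : Finset (Fin n)) := by
      rw [Finset.powersetCard_eq_filter, Finset.powerset_univ]
    rw [h2, Finset.card_powersetCard, Finset.card_univ, Fintype.card_fin]
  rw [triangleDensity, hnum]
  field_simp

end TriangleAux

/-- Lemma 4.1 of the paper (Triangle Model): the Lagrange multiplier of the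
canonical ensemble constrained on the triangle density is nonnegative
precisely when the constrained triangle density is at least 1/8. -/
theorem triangle_model_sign (n : ℕ) (hn : 3 ≤ n) (θstar Tstar : ℝ)
    (P : SimpleGraph (Fin n) → ℝ)
    (hP : ∀ G, P G = Real.exp (θstar * triangleDensity G) /
        ∑ G' : SimpleGraph (Fin n), Real.exp (θstar * triangleDensity G'))
    (hsoft : ∑ G : SimpleGraph (Fin n), triangleDensity G * P G = Tstar) :
    0 ≤ θstar ↔ 1 / 8 ≤ Tstar := by
  classical
  set Z : ℝ := ∑ G' : SimpleGraph (Fin n), Real.exp (θstar * triangleDensity G') with hZ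
  have hZpos : 0 < Z :=
    Finset.sum_pos (fun G _ => Real.exp_pos _) ⟨⊥, Finset.mem_univ _⟩
  have hT : Tstar = (∑ G : SimpleGraph (Fin n),
      triangleDensity G * Real.exp (θstar * triangleDensity G)) / Z := by
    rw [← hsoft, Finset.sum_div]
    apply Finset.sum_congr rfl
    intro G _
    rw [hP G]
    ring
  have hmean : ∑ G : SimpleGraph (Fin n), (triangleDensity G - 1/8) = 0 := by
    rw [Finset.sum_sub_distrib, TriangleAux.sum_density hn, Finset.sum_const,
      Finset.card_univ, nsmul_eq_mul]
    ring
  set c : ℝ := Real.exp (θstar * (1/8)) with hc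
  set S : ℝ := ∑ G : SimpleGraph (Fin n),
      (triangleDensity G - 1/8) * (Real.exp (θstar * triangleDensity G) - c) with hSdef
  have hSalt : S = (∑ G : SimpleGraph (Fin n),
      triangleDensity G * Real.exp (θstar * triangleDensity G)) - Z/8 := by
    have : S = (∑ G : SimpleGraph (Fin n),
          triangleDensity G * Real.exp (θstar * triangleDensity G))
        - (1/8) * (∑ G : SimpleGraph (Fin n), Real.exp (θstar * triangleDensity G))
        - c * ∑ G : SimpleGraph (Fin n), (triangleDensity G - 1/8) := by
      rw [hSdef, Finset.mul_sum, Finset.mul_sum, ← Finset.sum_sub_distrib,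
        ← Finset.sum_sub_distrib]
      apply Finset.sum_congr rfl
      intro G _
      ring
    rw [this, hmean, ← hZ]
    ring
  have hdiff : Tstar - 1/8 = S / Z := by
    rw [hT, hSalt, sub_div]
    congr 1
    field_simp
  have forward : 0 ≤ θstar → 0 ≤ S := by
    intro hθ
    apply Finset.sum_nonneg
    intro G _
    rcases le_total (1/8 : ℝ) (triangleDensity G) with h | h
    · apply mul_nonneg (by linarith)
      rw [sub_nonneg, hc]
      exact Real.exp_le_exp.2 (mul_le_mul_of_nonneg_left h hθ)
    · have h1 : triangleDensity G - 1/8 ≤ 0 := by linarith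
      have h2 : Real.exp (θstar * triangleDensity G) - c ≤ 0 := by
        rw [sub_nonpos, hc]
        exact Real.exp_le_exp.2 (mul_le_mul_of_nonneg_left h hθ)
      nlinarith
  have backward : θstar < 0 → S < 0 := by
    intro hθ
    have hle : ∀ G ∈ (Finset.univ : Finset (SimpleGraph (Fin n))),
        (triangleDensity G - 1/8) * (Real.exp (θstar * triangleDensity G) - c)
          ≤ (fun _ : SimpleGraph (Fin n) => (0:ℝ)) G := by
      intro G _
      rcases le_total (1/8 : ℝ) (triangleDensity G) with h | h
      · apply mul_nonpos_iff.2
        left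
        constructor
        · linarith
        · rw [sub_nonpos, hc]
          exact Real.exp_le_exp.2 (mul_le_mul_of_nonpos_left h hθ.le)
      · apply mul_nonpos_iff.2
        right
        constructor
        · linarith
        · rw [sub_nonneg, hc]
          exact Real.exp_le_exp.2 (mul_le_mul_of_nonpos_left h hθ.le)
    have hlt : (triangleDensity (⊤ : SimpleGraph (Fin n)) - 1/8)
        * (Real.exp (θstar * triangleDensity (⊤ : SimpleGraph (Fin n))) - c)
          < (fun _ : SimpleGraph (Fin n) => (0:ℝ)) ⊤ := by
      rw [TriangleAux.density_top hn]
      apply mul_neg_of_pos_of_neg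
      · norm_num
      · rw [sub_neg, hc]
        apply Real.exp_lt_exp.2
        nlinarith
    have := Finset.sum_lt_sum hle ⟨⊤, Finset.mem_univ _, hlt⟩
    rw [Finset.sum_const_zero] at this
    exact this
  constructor
  · intro hθ
    have h1 : 0 ≤ S / Z := div_nonneg (forward hθ) hZpos.le
    linarith [hdiff]
  · intro hT8
    by_contra hneg
    push_neg at hneg
    have h1 : S / Z < 0 := div_neg_of_neg_of_pos (backward hneg) hZpos
    linarith [hdiff]
end

section
/- Let I : [0,1] → ℝ be defined by I(u) = (1/2)u log u + (1/2)(1−u) log(1−u) (with 0 log 0 = 0). Let h : [0,1]² → [0,1] be measurable and symmetric (h(x,y) = h(y,x) for a.e. (x,y)), with edge density T₁ = ∫_{[0,1]²} h(x,y) dx dy and triangle density T₂ = ∫_{[0,1]³} h(x,y) h(y,z) h(z,x) dx dy dz. If T₂ ≠ T₁³, then ∫_{[0,1]²} I(h(x,y)) dx dy > I(T₁) (strict inequality). -/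
open MeasureTheory

lemma aux_slice_zero {N : Set (ℝ × ℝ)} (hNm : MeasurableSet N) (hN : volume N = 0) :
    volume {w : ℝ × ℝ × ℝ | (w.1, w.2.1) ∈ N} = 0 := by
  have hvol : (volume : Measure (ℝ × ℝ × ℝ))
      = ((volume : Measure ℝ).prod ((volume : Measure ℝ).prod (volume : Measure ℝ))) := by
    rw [Measure.volume_eq_prod, Measure.volume_eq_prod]
  have hmp : MeasurePreserving (MeasurableEquiv.prodAssoc.symm : ℝ × ℝ × ℝ ≃ᵐ (ℝ × ℝ) × ℝ)
      ((volume : Measure ℝ).prod ((volume : Measure ℝ).prod (volume : Measure ℝ)))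
      (((volume : Measure ℝ).prod (volume : Measure ℝ)).prod (volume : Measure ℝ)) :=
    MeasurePreserving.symm _ (measurePreserving_prodAssoc volume volume volume)
  have hset : {w : ℝ × ℝ × ℝ | (w.1, w.2.1) ∈ N}
      = (MeasurableEquiv.prodAssoc.symm : ℝ × ℝ × ℝ ≃ᵐ (ℝ × ℝ) × ℝ) ⁻¹' (N ×ˢ Set.univ) := by
    ext w; simp [MeasurableEquiv.prodAssoc]
  rw [hvol, hset, hmp.measure_preimage (hNm.prod MeasurableSet.univ).nullMeasurableSet,
    Measure.prod_prod]
  rw [Measure.volume_eq_prod] at hN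
  simp [hN]

lemma aux_swap_vol2 : MeasurePreserving (Prod.swap : ℝ × ℝ → ℝ × ℝ)
    (volume : Measure (ℝ × ℝ)) volume := by
  rw [Measure.volume_eq_prod]
  exact Measure.measurePreserving_swap

lemma aux_mp_vol3 : MeasurePreserving (fun w : ℝ × ℝ × ℝ => (w.1, (w.2.2, w.2.1)))
    (volume : Measure (ℝ × ℝ × ℝ)) volume := by
  have h2 := (MeasurePreserving.id (volume : Measure ℝ)).prod aux_swap_vol2
  rw [← Measure.volume_eq_prod] at h2
  exact h2

lemma aux_strictConvex :
    StrictConvexOn ℝ (Set.Icc (0:ℝ) 1)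
      (fun u => (1 / 2) * (u * Real.log u + (1 - u) * Real.log (1 - u))) := by
  have key1 : StrictConvexOn ℝ (Set.Icc (0:ℝ) 1) (fun u => u * Real.log u) :=
    Real.strictConvexOn_mul_log.subset Set.Icc_subset_Ici_self (convex_Icc 0 1)
  have key2 : StrictConvexOn ℝ (Set.Icc (0:ℝ) 1) (fun u => (1 - u) * Real.log (1 - u)) := by
    refine ⟨convex_Icc 0 1, fun x hx y hy hxy a b ha hb hab => ?_⟩
    have hx' : (1:ℝ) - x ∈ Set.Icc (0:ℝ) 1 := by
      simp only [Set.mem_Icc] at hx ⊢; constructor <;> linarith [hx.1, hx.2]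
    have hy' : (1:ℝ) - y ∈ Set.Icc (0:ℝ) 1 := by
      simp only [Set.mem_Icc] at hy ⊢; constructor <;> linarith [hy.1, hy.2]
    have hxy' : (1:ℝ) - x ≠ 1 - y := by intro hc; apply hxy; linarith
    have H := key1.2 hx' hy' hxy' ha hb hab
    simp only [smul_eq_mul] at H ⊢
    have heq : a * (1 - x) + b * (1 - y) = 1 - (a * x + b * y) := by linarith
    rw [heq] at H
    linarith
  have key12 := key1.add key2
  refine ⟨convex_Icc 0 1, fun x hx y hy hxy a b ha hb hab => ?_⟩
  have H := key12.2 hx hy hxy ha hb hab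
  simp only [smul_eq_mul, Pi.add_apply] at H ⊢
  linarith

/-- The strict inequality (eq. 5.21) in the paper's proof of case (II)(c):
if a symmetric graphon has triangle density different from the cube of its
edge density, then its entropy functional is strictly larger than `I(T₁)`. -/
theorem graphon_entropy_strict_jensen
    (I : ℝ → ℝ)
    (hI : ∀ u, I u = (1 / 2) * u * Real.log u +
        (1 / 2) * (1 - u) * Real.log (1 - u))
    (h : ℝ × ℝ → ℝ) (hmeas : Measurable h)
    (hrange : ∀ z ∈ Set.Icc (0 : ℝ) 1 ×ˢ Set.Icc (0 : ℝ) 1,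
        h z ∈ Set.Icc (0 : ℝ) 1)
    (hsymm : ∀ᵐ z ∂(volume.restrict (Set.Icc (0 : ℝ) 1 ×ˢ Set.Icc (0 : ℝ) 1)),
        h z = h (z.2, z.1))
    (T₁ T₂ : ℝ)
    (hT₁ : ∫ z in Set.Icc (0 : ℝ) 1 ×ˢ Set.Icc (0 : ℝ) 1, h z = T₁)
    (hT₂ : ∫ w in Set.Icc (0 : ℝ) 1 ×ˢ (Set.Icc (0 : ℝ) 1 ×ˢ Set.Icc (0 : ℝ) 1),
        h (w.1, w.2.1) * h (w.2.1, w.2.2) * h (w.2.2, w.1) = T₂)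
    (hne : T₂ ≠ T₁ ^ 3) :
    I T₁ < ∫ z in Set.Icc (0 : ℝ) 1 ×ˢ Set.Icc (0 : ℝ) 1, I (h z) := by
  classical
  set sq : Set (ℝ × ℝ) := Set.Icc (0:ℝ) 1 ×ˢ Set.Icc (0:ℝ) 1 with hsqdef
  have hsqm : MeasurableSet sq := measurableSet_Icc.prod measurableSet_Icc
  have hvolsq : volume sq = 1 := by
    rw [hsqdef, Measure.volume_eq_prod, Measure.prod_prod, Real.volume_Icc]
    norm_num
  haveI : IsProbabilityMeasure (volume.restrict sq) :=
    ⟨by rw [Measure.restrict_apply_univ]; exact hvolsq⟩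
  have hIfun : I = fun u => (1/2) * (u * Real.log u + (1-u) * Real.log (1-u)) :=
    funext fun u => by rw [hI]; ring
  have hIconv : StrictConvexOn ℝ (Set.Icc (0:ℝ) 1) I := hIfun ▸ aux_strictConvex
  have hIcont : Continuous I := by
    rw [hIfun]
    have c2 : Continuous fun u : ℝ => (1 - u) * Real.log (1 - u) :=
      Real.continuous_mul_log.comp (continuous_const.sub continuous_id)
    exact continuous_const.mul (Real.continuous_mul_log.add c2)
  have hfs : ∀ᵐ z ∂(volume.restrict sq), h z ∈ Set.Icc (0:ℝ) 1 :=
    (ae_restrict_iff' hsqm).2 (Filter.Eventually.of_forall hrange)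
  have hInt : Integrable h (volume.restrict sq) := by
    refine Integrable.mono' (integrable_const 1) hmeas.aestronglyMeasurable ?_
    filter_upwards [hfs] with z hz
    rw [Real.norm_eq_abs, abs_le]
    exact ⟨by linarith [hz.1], hz.2⟩
  obtain ⟨C, hC⟩ := isCompact_Icc.exists_bound_of_continuousOn (f := I) hIcont.continuousOn
  have hIInt : Integrable (I ∘ h) (volume.restrict sq) := by
    refine Integrable.mono' (integrable_const C)
      ((hIcont.measurable.comp hmeas).aestronglyMeasurable) ?_
    filter_upwards [hfs] with z hz
    exact hC _ hz
  have havg : (⨍ z, h z ∂(volume.restrict sq)) = T₁ := by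
    rw [average_eq_integral]; exact hT₁
  rcases hIconv.ae_eq_const_or_map_average_lt hIcont.continuousOn isClosed_Icc hfs hInt hIInt
    with hconst | hlt
  · exfalso
    rw [havg] at hconst
    have hae : ∀ᵐ z ∂volume, z ∈ sq → h z = T₁ := (ae_restrict_iff' hsqm).1 hconst
    set N : Set (ℝ × ℝ) := sq ∩ {z | h z ≠ T₁} with hNdef
    have hNm : MeasurableSet N := hsqm.inter ((hmeas (measurableSet_singleton T₁)).compl)
    have hN0 : volume N = 0 := by
      have h0 := ae_iff.1 hae
      refine measure_mono_null ?_ h0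
      intro z hz
      simp only [hNdef, Set.mem_inter_iff, Set.mem_setOf_eq] at hz
      simp only [Set.mem_setOf_eq, Classical.not_imp]
      exact hz
    have hS1 : volume {w : ℝ × ℝ × ℝ | (w.1, w.2.1) ∈ N} = 0 := aux_slice_zero hNm hN0
    have hS2 : volume {w : ℝ × ℝ × ℝ | w.2 ∈ N} = 0 := by
      have hset : {w : ℝ × ℝ × ℝ | w.2 ∈ N} = (Set.univ : Set ℝ) ×ˢ N := by
        ext w; simp
      have hN0' := hN0
      rw [Measure.volume_eq_prod] at hN0'
      rw [hset, Measure.volume_eq_prod, Measure.prod_prod]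
      simp [hN0, hN0']
    set M : Set (ℝ × ℝ) := Prod.swap ⁻¹' N with hMdef
    have hMm : MeasurableSet M := measurable_swap hNm
    have hM0 : volume M = 0 := by
      rw [hMdef, aux_swap_vol2.measure_preimage hNm.nullMeasurableSet]
      exact hN0
    have hS3' : volume {w : ℝ × ℝ × ℝ | (w.1, w.2.1) ∈ M} = 0 := aux_slice_zero hMm hM0
    have hS3'm : MeasurableSet {w : ℝ × ℝ × ℝ | (w.1, w.2.1) ∈ M} :=
      (measurable_fst.prodMk (measurable_fst.comp measurable_snd)) hMm
    have hS3 : volume {w : ℝ × ℝ × ℝ | (w.2.2, w.1) ∈ N} = 0 := by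
      have hset : {w : ℝ × ℝ × ℝ | (w.2.2, w.1) ∈ N}
          = (fun w : ℝ × ℝ × ℝ => (w.1, (w.2.2, w.2.1))) ⁻¹'
              {w : ℝ × ℝ × ℝ | (w.1, w.2.1) ∈ M} := by
        ext w; simp [hMdef]
      rw [hset, aux_mp_vol3.measure_preimage hS3'm.nullMeasurableSet]
      exact hS3'
    set cube : Set (ℝ × ℝ × ℝ) :=
      Set.Icc (0:ℝ) 1 ×ˢ (Set.Icc (0:ℝ) 1 ×ˢ Set.Icc (0:ℝ) 1) with hcubedef
    have hcubem : MeasurableSet cube :=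
      measurableSet_Icc.prod (measurableSet_Icc.prod measurableSet_Icc)
    have hvolcube : volume cube = 1 := by
      have : volume (Set.Icc (0:ℝ) 1 ×ˢ Set.Icc (0:ℝ) 1) = 1 := hvolsq
      rw [hcubedef, Measure.volume_eq_prod, Measure.prod_prod, this, Real.volume_Icc]
      norm_num
    have haef : ∀ᵐ w ∂volume, w ∈ cube →
        h (w.1, w.2.1) * h (w.2.1, w.2.2) * h (w.2.2, w.1) = T₁ ^ 3 := by
      rw [ae_iff]
      refine measure_mono_null ?_ (measure_union_null (measure_union_null hS1 hS2) hS3)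
      intro w hw
      simp only [Set.mem_setOf_eq, Classical.not_imp] at hw
      obtain ⟨hwc, hne'⟩ := hw
      rw [hcubedef, Set.mem_prod, Set.mem_prod] at hwc
      obtain ⟨hw1, hw2, hw3⟩ := hwc
      by_contra hcon
      simp only [Set.mem_union, Set.mem_setOf_eq, not_or] at hcon
      obtain ⟨⟨hc1, hc2⟩, hc3⟩ := hcon
      have e1 : h (w.1, w.2.1) = T₁ := by
        by_contra he
        exact hc1 ⟨Set.mem_prod.2 ⟨hw1, hw2⟩, he⟩
      have e2 : h (w.2.1, w.2.2) = T₁ := by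
        by_contra he
        exact hc2 ⟨Set.mem_prod.2 ⟨hw2, hw3⟩, he⟩
      have e3 : h (w.2.2, w.1) = T₁ := by
        by_contra he
        exact hc3 ⟨Set.mem_prod.2 ⟨hw3, hw1⟩, he⟩
      apply hne'
      rw [e1, e2, e3]; ring
    have hT₂' : T₂ = T₁ ^ 3 := by
      rw [← hT₂]
      have : ∫ w in cube, h (w.1, w.2.1) * h (w.2.1, w.2.2) * h (w.2.2, w.1)
          = ∫ _w in cube, (T₁ ^ 3 : ℝ) :=
        integral_congr_ae ((ae_restrict_iff' hcubem).2 haef)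
      rw [hcubedef] at this
      rw [this, setIntegral_const]
      rw [← hcubedef, measureReal_def, hvolcube]
      simp
    exact hne hT₂'
  · rw [havg] at hlt
    calc I T₁ < ⨍ z, I (h z) ∂(volume.restrict sq) := hlt
      _ = ∫ z in sq, I (h z) := average_eq_integral (μ := volume.restrict sq) (fun z => I (h z))
end

section
/- Let ε ∈ (0, 1/6), set s = √(1−6ε), c = (2+s)/6 and p = 4c(1−2c)/(1−c)². Define h*_ε : [0,1]² → [0,1] by: h*_ε(x,y) = 1 if x < c < y or y < c < x; h*_ε(x,y) = p if c < x < (1+c)/2 < y or c < y < (1+c)/2 < x; and h*_ε(x,y) = 0 otherwise. Then the edge density satisfies ∫_{[0,1]²} h*_ε(x,y) dx dy = 1/2 + ε, and the triangle density satisfies ∫_{[0,1]³} h*_ε(x,y) h*_ε(y,z) h*_ε(z,x) dx dy dz = 6c²(1−2c). -/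
open MeasureTheory

noncomputable def stepL (a x : ℝ) : ℝ := if x < a then 1 else 0
noncomputable def stepR (a x : ℝ) : ℝ := if a < x then 1 else 0
noncomputable def stepM (a b x : ℝ) : ℝ := if a < x ∧ x < b then 1 else 0

lemma stepL_eq (a : ℝ) : stepL a = (Set.Iio a).indicator 1 := by
  funext x; simp [stepL, Set.indicator_apply]

lemma stepR_eq (a : ℝ) : stepR a = (Set.Ioi a).indicator 1 := by
  funext x; simp [stepR, Set.indicator_apply]

lemma stepM_eq (a b : ℝ) : stepM a b = (Set.Ioo a b).indicator 1 := by
  funext x; simp [stepM, Set.indicator_apply, Set.mem_Ioo]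

lemma integrableOn_indicator_one (t : Set ℝ) (ht : MeasurableSet t) :
    IntegrableOn (t.indicator (1 : ℝ → ℝ)) (Set.Icc 0 1) := by
  apply Integrable.indicator _ ht
  show Integrable (fun _ => (1:ℝ)) _
  rw [← IntegrableOn, integrableOn_const_iff]
  right
  simp [Real.volume_Icc]

lemma integrableOn_stepL (a : ℝ) : IntegrableOn (stepL a) (Set.Icc 0 1) := by
  rw [stepL_eq]; exact integrableOn_indicator_one _ measurableSet_Iio

lemma integrableOn_stepR (a : ℝ) : IntegrableOn (stepR a) (Set.Icc 0 1) := by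
  rw [stepR_eq]; exact integrableOn_indicator_one _ measurableSet_Ioi

lemma integrableOn_stepM (a b : ℝ) : IntegrableOn (stepM a b) (Set.Icc 0 1) := by
  rw [stepM_eq]; exact integrableOn_indicator_one _ measurableSet_Ioo

lemma integral_stepL (a : ℝ) (h0 : 0 ≤ a) (h1 : a ≤ 1) :
    ∫ x in Set.Icc (0:ℝ) 1, stepL a x = a := by
  rw [stepL_eq]
  rw [setIntegral_indicator measurableSet_Iio]
  have : Set.Icc (0:ℝ) 1 ∩ Set.Iio a = Set.Ico 0 a := by
    ext x; simp only [Set.mem_inter_iff, Set.mem_Icc, Set.mem_Iio, Set.mem_Ico]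
    constructor
    · rintro ⟨⟨h, _⟩, h'⟩; exact ⟨h, h'⟩
    · rintro ⟨h, h'⟩; exact ⟨⟨h, by linarith⟩, h'⟩
  rw [this]
  simp only [Pi.one_apply, setIntegral_const, smul_eq_mul, mul_one, Real.volume_Ico, sub_zero]
  rw [Real.volume_real_Ico_of_le h0, sub_zero]

lemma integral_stepR (a : ℝ) (h0 : 0 ≤ a) (h1 : a ≤ 1) :
    ∫ x in Set.Icc (0:ℝ) 1, stepR a x = 1 - a := by
  rw [stepR_eq]
  rw [setIntegral_indicator measurableSet_Ioi]
  have : Set.Icc (0:ℝ) 1 ∩ Set.Ioi a = Set.Ioc a 1 := by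
    ext x; simp only [Set.mem_inter_iff, Set.mem_Icc, Set.mem_Ioi, Set.mem_Ioc]
    constructor
    · rintro ⟨⟨_, h⟩, h'⟩; exact ⟨h', h⟩
    · rintro ⟨h, h'⟩; exact ⟨⟨by linarith, h'⟩, h⟩
  rw [this]
  simp only [Pi.one_apply, setIntegral_const, smul_eq_mul, mul_one, Real.volume_Ioc]
  exact Real.volume_real_Ioc_of_le h1

lemma integral_stepM (a b : ℝ) (h0 : 0 ≤ a) (hab : a ≤ b) (h1 : b ≤ 1) :
    ∫ x in Set.Icc (0:ℝ) 1, stepM a b x = b - a := by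
  rw [stepM_eq]
  rw [setIntegral_indicator measurableSet_Ioo]
  have : Set.Icc (0:ℝ) 1 ∩ Set.Ioo a b = Set.Ioo a b := by
    rw [Set.inter_eq_self_of_subset_right]
    intro x hx
    obtain ⟨hx1, hx2⟩ := hx
    rw [Set.mem_Icc]
    exact ⟨by linarith, by linarith⟩
  rw [this]
  simp only [Pi.one_apply, setIntegral_const, smul_eq_mul, mul_one, Real.volume_Ioo]
  exact Real.volume_real_Ioo_of_le hab

set_option maxHeartbeats 2000000 in
/-- The optimiser graphon `h*_ε` of Radin–Sadun on the scallopy curve (for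
`ℓ = 2`), used in the paper's proof of case (II)(d): its edge density equals
`1/2 + ε` and its triangle density equals `6c²(1−2c)`. -/
theorem scallopy_graphon_densities
    (ε : ℝ) (hε : ε ∈ Set.Ioo (0 : ℝ) (1 / 6))
    (s c p : ℝ)
    (hs : s = Real.sqrt (1 - 6 * ε))
    (hc : c = (2 + s) / 6)
    (hp : p = 4 * c * (1 - 2 * c) / (1 - c) ^ 2)
    (h : ℝ × ℝ → ℝ)
    (hh : ∀ x y : ℝ, h (x, y) =
      if (x < c ∧ c < y) ∨ (y < c ∧ c < x) then 1
      else if (c < x ∧ x < (1 + c) / 2 ∧ (1 + c) / 2 < y) ∨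
          (c < y ∧ y < (1 + c) / 2 ∧ (1 + c) / 2 < x) then p
      else 0) :
    (∫ z in Set.Icc (0 : ℝ) 1 ×ˢ Set.Icc (0 : ℝ) 1, h z = 1 / 2 + ε) ∧
    (∫ w in Set.Icc (0 : ℝ) 1 ×ˢ (Set.Icc (0 : ℝ) 1 ×ˢ Set.Icc (0 : ℝ) 1),
        h (w.1, w.2.1) * h (w.2.1, w.2.2) * h (w.2.2, w.1)
      = 6 * c ^ 2 * (1 - 2 * c)) := by
  obtain ⟨hε0, hε6⟩ := hε
  set m : ℝ := (1 + c) / 2 with hm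
  -- basic bounds
  have hs0 : 0 ≤ s := hs ▸ Real.sqrt_nonneg _
  have hs2 : s ^ 2 = 1 - 6 * ε := by
    rw [hs, sq, Real.mul_self_sqrt (by linarith)]
  have hs1 : s < 1 := by nlinarith
  have hc0 : 0 < c := by rw [hc]; linarith
  have hc12 : c < 1 / 2 := by rw [hc]; linarith
  have hcm : c < m := by rw [hm]; linarith
  have hm1 : m < 1 := by rw [hm]; linarith
  -- the key algebraic identity for p
  have h1 : p * (1 - c) ^ 2 = 4 * c * (1 - 2 * c) := by
    rw [hp, div_mul_cancel₀ _ (pow_ne_zero 2 (by linarith : (1:ℝ) - c ≠ 0))]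
  have hcε : ε = 4 * c - 6 * c ^ 2 - 1 / 2 := by
    have hsc : s = 6 * c - 2 := by rw [hc]; ring
    rw [hsc] at hs2
    linear_combination (1 / 6) * hs2
  -- the five regions for a point t
  have tri : ∀ t : ℝ,
      (stepL c t = 1 ∧ stepR c t = 0 ∧ stepM c m t = 0 ∧ stepR m t = 0 ∧ t < c ∧ t < m)
      ∨ (stepL c t = 0 ∧ stepR c t = 0 ∧ stepM c m t = 0 ∧ stepR m t = 0 ∧ c ≤ t ∧ t ≤ c)
      ∨ (stepL c t = 0 ∧ stepR c t = 1 ∧ stepM c m t = 1 ∧ stepR m t = 0 ∧ c < t ∧ t < m)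
      ∨ (stepL c t = 0 ∧ stepR c t = 1 ∧ stepM c m t = 0 ∧ stepR m t = 0 ∧ m ≤ t ∧ t ≤ m)
      ∨ (stepL c t = 0 ∧ stepR c t = 1 ∧ stepM c m t = 0 ∧ stepR m t = 1 ∧ c < t ∧ m < t) := by
    intro t
    rcases lt_trichotomy t c with ht | ht | ht
    · exact Or.inl ⟨if_pos ht, if_neg (by linarith), if_neg (by rintro ⟨a, _⟩; linarith),
        if_neg (by intro a; linarith), ht, by linarith⟩
    · exact Or.inr (Or.inl ⟨if_neg (by linarith), if_neg (by linarith),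
        if_neg (by rintro ⟨a, _⟩; linarith), if_neg (by intro a; linarith), le_of_eq ht.symm,
        le_of_eq ht⟩)
    · rcases lt_trichotomy t m with ht' | ht' | ht'
      · exact Or.inr (Or.inr (Or.inl ⟨if_neg (by linarith), if_pos ht, if_pos ⟨ht, ht'⟩,
          if_neg (by intro a; linarith), ht, ht'⟩))
      · exact Or.inr (Or.inr (Or.inr (Or.inl ⟨if_neg (by linarith), if_pos ht,
          if_neg (by rintro ⟨_, a⟩; linarith), if_neg (by intro a; linarith),
          le_of_eq ht'.symm, le_of_eq ht'⟩)))
      · exact Or.inr (Or.inr (Or.inr (Or.inr ⟨if_neg (by linarith), if_pos ht,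
          if_neg (by rintro ⟨_, a⟩; linarith), if_pos ht', ht, ht'⟩)))
  -- pointwise decomposition of h
  have key : ∀ x y : ℝ, h (x, y) =
      stepL c x * stepR c y + stepR c x * stepL c y
      + (p * stepM c m x) * stepR m y + (p * stepR m x) * stepM c m y := by
    intro x y
    rw [hh x y]
    rcases tri x with (⟨e1, e2, e3, e4, i1, i2⟩ | ⟨e1, e2, e3, e4, i1, i2⟩ |
        ⟨e1, e2, e3, e4, i1, i2⟩ | ⟨e1, e2, e3, e4, i1, i2⟩ | ⟨e1, e2, e3, e4, i1, i2⟩) <;>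
      rcases tri y with (⟨a1, a2, a3, a4, j1, j2⟩ | ⟨a1, a2, a3, a4, j1, j2⟩ |
        ⟨a1, a2, a3, a4, j1, j2⟩ | ⟨a1, a2, a3, a4, j1, j2⟩ | ⟨a1, a2, a3, a4, j1, j2⟩) <;>
      rw [e1, e2, e3, e4, a1, a2, a3, a4] <;>
      split_ifs with hA hB <;>
      first
        | ring1
        | (exfalso; rcases hA with ⟨p1, p2⟩ | ⟨p1, p2⟩ <;> linarith)
        | (exfalso; rcases hB with ⟨p1, p2, p3⟩ | ⟨p1, p2, p3⟩ <;> linarith)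
        | (exfalso; exact hA (Or.inl ⟨by linarith, by linarith⟩))
        | (exfalso; exact hA (Or.inr ⟨by linarith, by linarith⟩))
        | (exfalso; exact hB (Or.inl ⟨by linarith, by linarith, by linarith⟩))
        | (exfalso; exact hB (Or.inr ⟨by linarith, by linarith, by linarith⟩))
  -- pointwise decomposition of the triangle integrand
  have keyH : ∀ x y z : ℝ, h (x, y) * h (y, z) * h (z, x) =
      (p * stepL c x) * (stepM c m y * stepR m z)
      + (p * stepL c x) * (stepR m y * stepM c m z)
      + (p * stepR m x) * (stepL c y * stepM c m z)
      + (p * stepM c m x) * (stepL c y * stepR m z)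
      + (p * stepM c m x) * (stepR m y * stepL c z)
      + (p * stepR m x) * (stepM c m y * stepL c z) := by
    intro x y z
    rw [key x y, key y z, key z x]
    rcases tri x with (⟨e1, e2, e3, e4, i1, i2⟩ | ⟨e1, e2, e3, e4, i1, i2⟩ |
        ⟨e1, e2, e3, e4, i1, i2⟩ | ⟨e1, e2, e3, e4, i1, i2⟩ | ⟨e1, e2, e3, e4, i1, i2⟩) <;>
      rcases tri y with (⟨a1, a2, a3, a4, j1, j2⟩ | ⟨a1, a2, a3, a4, j1, j2⟩ |
        ⟨a1, a2, a3, a4, j1, j2⟩ | ⟨a1, a2, a3, a4, j1, j2⟩ | ⟨a1, a2, a3, a4, j1, j2⟩) <;>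
      rcases tri z with (⟨b1, b2, b3, b4, k1, k2⟩ | ⟨b1, b2, b3, b4, k1, k2⟩ |
        ⟨b1, b2, b3, b4, k1, k2⟩ | ⟨b1, b2, b3, b4, k1, k2⟩ | ⟨b1, b2, b3, b4, k1, k2⟩) <;>
      rw [e1, e2, e3, e4, a1, a2, a3, a4, b1, b2, b3, b4] <;> ring
  -- integrals of the pieces
  have eL : ∫ x in Set.Icc (0:ℝ) 1, stepL c x = c := integral_stepL c hc0.le (by linarith)
  have eR : ∫ x in Set.Icc (0:ℝ) 1, stepR c x = 1 - c := integral_stepR c hc0.le (by linarith)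
  have eM : ∫ x in Set.Icc (0:ℝ) 1, stepM c m x = m - c :=
    integral_stepM c m hc0.le hcm.le hm1.le
  have eV : ∫ x in Set.Icc (0:ℝ) 1, stepR m x = 1 - m :=
    integral_stepR m (by linarith) hm1.le
  constructor
  · -- edge density
    have hEq : h = fun q : ℝ × ℝ =>
        stepL c q.1 * stepR c q.2 + stepR c q.1 * stepL c q.2
        + (p * stepM c m q.1) * stepR m q.2 + (p * stepR m q.1) * stepM c m q.2 :=
      funext fun q => key q.1 q.2
    rw [hEq, Measure.volume_eq_prod, ← Measure.prod_restrict]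
    have I1 : Integrable (fun q : ℝ × ℝ => stepL c q.1 * stepR c q.2)
        ((volume.restrict (Set.Icc (0:ℝ) 1)).prod (volume.restrict (Set.Icc (0:ℝ) 1))) :=
      (integrableOn_stepL c).mul_prod (integrableOn_stepR c)
    have I2 : Integrable (fun q : ℝ × ℝ => stepR c q.1 * stepL c q.2)
        ((volume.restrict (Set.Icc (0:ℝ) 1)).prod (volume.restrict (Set.Icc (0:ℝ) 1))) :=
      (integrableOn_stepR c).mul_prod (integrableOn_stepL c)
    have I3 : Integrable (fun q : ℝ × ℝ => (p * stepM c m q.1) * stepR m q.2)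
        ((volume.restrict (Set.Icc (0:ℝ) 1)).prod (volume.restrict (Set.Icc (0:ℝ) 1))) :=
      ((integrableOn_stepM c m).const_mul p).mul_prod (integrableOn_stepR m)
    have I4 : Integrable (fun q : ℝ × ℝ => (p * stepR m q.1) * stepM c m q.2)
        ((volume.restrict (Set.Icc (0:ℝ) 1)).prod (volume.restrict (Set.Icc (0:ℝ) 1))) :=
      ((integrableOn_stepR m).const_mul p).mul_prod (integrableOn_stepM c m)
    have I12 : Integrable (fun q : ℝ × ℝ => stepL c q.1 * stepR c q.2
        + stepR c q.1 * stepL c q.2)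
        ((volume.restrict (Set.Icc (0:ℝ) 1)).prod (volume.restrict (Set.Icc (0:ℝ) 1))) :=
      I1.add I2
    have I123 : Integrable (fun q : ℝ × ℝ => stepL c q.1 * stepR c q.2
        + stepR c q.1 * stepL c q.2 + (p * stepM c m q.1) * stepR m q.2)
        ((volume.restrict (Set.Icc (0:ℝ) 1)).prod (volume.restrict (Set.Icc (0:ℝ) 1))) :=
      I12.add I3
    rw [integral_add I123 I4, integral_add I12 I3, integral_add I1 I2]
    rw [integral_prod_mul (stepL c) (stepR c), integral_prod_mul (stepR c) (stepL c),
      integral_prod_mul (fun x => p * stepM c m x) (stepR m),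
      integral_prod_mul (fun x => p * stepR m x) (stepM c m)]
    rw [integral_const_mul, integral_const_mul, eL, eR, eM, eV]
    rw [hm]
    linear_combination (1 / 2) * h1 - hcε
  · -- triangle density
    have hEq : (fun w : ℝ × (ℝ × ℝ) => h (w.1, w.2.1) * h (w.2.1, w.2.2) * h (w.2.2, w.1)) =
        fun w : ℝ × (ℝ × ℝ) =>
          (p * stepL c w.1) * (stepM c m w.2.1 * stepR m w.2.2)
          + (p * stepL c w.1) * (stepR m w.2.1 * stepM c m w.2.2)
          + (p * stepR m w.1) * (stepL c w.2.1 * stepM c m w.2.2)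
          + (p * stepM c m w.1) * (stepL c w.2.1 * stepR m w.2.2)
          + (p * stepM c m w.1) * (stepR m w.2.1 * stepL c w.2.2)
          + (p * stepR m w.1) * (stepM c m w.2.1 * stepL c w.2.2) :=
      funext fun w => keyH w.1 w.2.1 w.2.2
    rw [hEq, Measure.volume_eq_prod, ← Measure.prod_restrict, Measure.volume_eq_prod,
      ← Measure.prod_restrict]
    set ρ : Measure ℝ := volume.restrict (Set.Icc (0:ℝ) 1) with hρ
    have J1 : Integrable (fun w : ℝ × (ℝ × ℝ) =>
        (p * stepL c w.1) * (stepM c m w.2.1 * stepR m w.2.2)) (ρ.prod (ρ.prod ρ)) :=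
      ((integrableOn_stepL c).const_mul p).mul_prod
        ((integrableOn_stepM c m).mul_prod (integrableOn_stepR m))
    have J2 : Integrable (fun w : ℝ × (ℝ × ℝ) =>
        (p * stepL c w.1) * (stepR m w.2.1 * stepM c m w.2.2)) (ρ.prod (ρ.prod ρ)) :=
      ((integrableOn_stepL c).const_mul p).mul_prod
        ((integrableOn_stepR m).mul_prod (integrableOn_stepM c m))
    have J3 : Integrable (fun w : ℝ × (ℝ × ℝ) =>
        (p * stepR m w.1) * (stepL c w.2.1 * stepM c m w.2.2)) (ρ.prod (ρ.prod ρ)) :=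
      ((integrableOn_stepR m).const_mul p).mul_prod
        ((integrableOn_stepL c).mul_prod (integrableOn_stepM c m))
    have J4 : Integrable (fun w : ℝ × (ℝ × ℝ) =>
        (p * stepM c m w.1) * (stepL c w.2.1 * stepR m w.2.2)) (ρ.prod (ρ.prod ρ)) :=
      ((integrableOn_stepM c m).const_mul p).mul_prod
        ((integrableOn_stepL c).mul_prod (integrableOn_stepR m))
    have J5 : Integrable (fun w : ℝ × (ℝ × ℝ) =>
        (p * stepM c m w.1) * (stepR m w.2.1 * stepL c w.2.2)) (ρ.prod (ρ.prod ρ)) :=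
      ((integrableOn_stepM c m).const_mul p).mul_prod
        ((integrableOn_stepR m).mul_prod (integrableOn_stepL c))
    have J6 : Integrable (fun w : ℝ × (ℝ × ℝ) =>
        (p * stepR m w.1) * (stepM c m w.2.1 * stepL c w.2.2)) (ρ.prod (ρ.prod ρ)) :=
      ((integrableOn_stepR m).const_mul p).mul_prod
        ((integrableOn_stepM c m).mul_prod (integrableOn_stepL c))
    have J12 : Integrable (fun w : ℝ × (ℝ × ℝ) =>
        (p * stepL c w.1) * (stepM c m w.2.1 * stepR m w.2.2)
        + (p * stepL c w.1) * (stepR m w.2.1 * stepM c m w.2.2)) (ρ.prod (ρ.prod ρ)) :=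
      J1.add J2
    have J123 : Integrable (fun w : ℝ × (ℝ × ℝ) =>
        (p * stepL c w.1) * (stepM c m w.2.1 * stepR m w.2.2)
        + (p * stepL c w.1) * (stepR m w.2.1 * stepM c m w.2.2)
        + (p * stepR m w.1) * (stepL c w.2.1 * stepM c m w.2.2)) (ρ.prod (ρ.prod ρ)) :=
      J12.add J3
    have J1234 : Integrable (fun w : ℝ × (ℝ × ℝ) =>
        (p * stepL c w.1) * (stepM c m w.2.1 * stepR m w.2.2)
        + (p * stepL c w.1) * (stepR m w.2.1 * stepM c m w.2.2)
        + (p * stepR m w.1) * (stepL c w.2.1 * stepM c m w.2.2)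
        + (p * stepM c m w.1) * (stepL c w.2.1 * stepR m w.2.2)) (ρ.prod (ρ.prod ρ)) :=
      J123.add J4
    have J12345 : Integrable (fun w : ℝ × (ℝ × ℝ) =>
        (p * stepL c w.1) * (stepM c m w.2.1 * stepR m w.2.2)
        + (p * stepL c w.1) * (stepR m w.2.1 * stepM c m w.2.2)
        + (p * stepR m w.1) * (stepL c w.2.1 * stepM c m w.2.2)
        + (p * stepM c m w.1) * (stepL c w.2.1 * stepR m w.2.2)
        + (p * stepM c m w.1) * (stepR m w.2.1 * stepL c w.2.2)) (ρ.prod (ρ.prod ρ)) :=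
      J1234.add J5
    rw [integral_add J12345 J6, integral_add J1234 J5, integral_add J123 J4,
      integral_add J12 J3, integral_add J1 J2]
    rw [integral_prod_mul (fun x => p * stepL c x) (fun q : ℝ × ℝ => stepM c m q.1 * stepR m q.2),
      integral_prod_mul (fun x => p * stepL c x) (fun q : ℝ × ℝ => stepR m q.1 * stepM c m q.2),
      integral_prod_mul (fun x => p * stepR m x) (fun q : ℝ × ℝ => stepL c q.1 * stepM c m q.2),
      integral_prod_mul (fun x => p * stepM c m x) (fun q : ℝ × ℝ => stepL c q.1 * stepR m q.2),
      integral_prod_mul (fun x => p * stepM c m x) (fun q : ℝ × ℝ => stepR m q.1 * stepL c q.2),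
      integral_prod_mul (fun x => p * stepR m x) (fun q : ℝ × ℝ => stepM c m q.1 * stepL c q.2)]
    rw [integral_prod_mul (stepM c m) (stepR m), integral_prod_mul (stepR m) (stepM c m),
      integral_prod_mul (stepL c) (stepM c m), integral_prod_mul (stepL c) (stepR m),
      integral_prod_mul (stepR m) (stepL c), integral_prod_mul (stepM c m) (stepL c)]
    simp only [integral_const_mul]
    rw [hρ] at *
    rw [eL, eM, eV]
    rw [hm]
    linear_combination (3 * c / 2) * h1
end
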